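/- Let F ∈ ℂ, k ∈ ℤ∖{0}, a ∈ ℂ∖{0}, and m ∈ ℂ. On V define linear operators 𝕃_n, 𝕀_n by 𝕃_n(v_t) = t·v_{n+t} for t ≠ −n, 𝕃_n(v_{−n}) = 0, 𝕀_n(v_t) = 0 for t ≠ 0, 𝕀_0(v_0) = 0, and 𝕀_n(v_0) = F·v_n for n ≠ 0, and define the linear map φ by φ(v_t) = aᵗ·m·v_{kt}. Then for all n ∈ ℤ: φ ∘ 𝕃_n = (1/k)aⁿ·𝕃_{kn} ∘ φ and φ ∘ 𝕀_n = aⁿ·𝕀_{kn} ∘ φ; consequently (φ∘𝕃_n)(v_t) = t·a^{n+t}·m·v_{k(n+t)} for t ≠ −n, (φ∘𝕃_n)(v_{−n}) = 0, (φ∘𝕀_n)(v_t) = 0 for t ≠ 0, and (φ∘𝕀_n)(v_0) = F·aⁿ·m·v_{kn} for n ≠ 0. -/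

import Mathlib

/-- The ℂ-vector space with basis `{v t : t ∈ ℤ}` (finitely supported functions ℤ → ℂ). -/
abbrev V : Type := ℤ →₀ ℂ

/-- The basis vector `v t`. -/
noncomputable def v (t : ℤ) : V := Finsupp.single t 1

/-- The linear operator on `V` determined by its values on the basis vectors. -/
noncomputable def op (f : ℤ → V) : V →ₗ[ℂ] V := Finsupp.lift V ℂ ℤ f

/-- The operator `𝕃 n` of the module `Ṽ_F`:
`𝕃 n (v t) = t v (n+t)` for `t ≠ -n`, `𝕃 n (v (-n)) = 0`. -/
noncomputable def Lop (n : ℤ) : V →ₗ[ℂ] V :=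
  op fun t => if t = -n then 0 else (t : ℂ) • v (n + t)

/-- The operator `𝕀 n` of the module `Ṽ_F`:
`𝕀 n (v t) = 0` for `t ≠ 0`, `𝕀 0 (v 0) = 0`, and `𝕀 n (v 0) = F • v n` for `n ≠ 0`. -/
noncomputable def Iop (F : ℂ) (n : ℤ) : V →ₗ[ℂ] V :=
  op fun t => if t = 0 ∧ n ≠ 0 then F • v n else 0

/-- The twisting linear map `φ (v t) = aᵗ m • v (kt)`. -/
noncomputable def φmap (a m : ℂ) (k : ℤ) : V →ₗ[ℂ] V :=
  op fun t => (a ^ t * m) • v (k * t)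

lemma op_v (f : ℤ → V) (t : ℤ) : op f (v t) = f t := by
  rw [op, v, Finsupp.lift_apply, Finsupp.sum_single_index (by simp), one_smul]

lemma phi_v (a m : ℂ) (k t : ℤ) : φmap a m k (v t) = (a ^ t * m) • v (k * t) := by
  simp [φmap, op_v]

lemma Lop_v (n t : ℤ) :
    Lop n (v t) = if t = -n then 0 else (t : ℂ) • v (n + t) := by
  simp [Lop, op_v]

lemma Iop_v (F : ℂ) (n t : ℤ) :
    Iop F n (v t) = if t = 0 ∧ n ≠ 0 then F • v n else 0 := by
  simp [Iop, op_v]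

theorem tildeV_F_intertwine (F : ℂ) (k : ℤ) (hk : k ≠ 0) (a : ℂ) (ha : a ≠ 0)
    (m : ℂ) :
    (∀ n : ℤ, φmap a m k ∘ₗ Lop n
        = ((1 / (k : ℂ) * a ^ n) • Lop (k * n)) ∘ₗ φmap a m k) ∧
    (∀ n : ℤ, φmap a m k ∘ₗ Iop F n = (a ^ n • Iop F (k * n)) ∘ₗ φmap a m k) ∧
    (∀ n t : ℤ, t ≠ -n → φmap a m k (Lop n (v t))
        = ((t : ℂ) * a ^ (n + t) * m) • v (k * (n + t))) ∧
    (∀ n : ℤ, φmap a m k (Lop n (v (-n))) = 0) ∧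
    (∀ n t : ℤ, t ≠ 0 → φmap a m k (Iop F n (v t)) = 0) ∧
    (∀ n : ℤ, n ≠ 0 → φmap a m k (Iop F n (v 0)) = (F * a ^ n * m) • v (k * n)) := by
  have hL : ∀ n t : ℤ, t ≠ -n → φmap a m k (Lop n (v t))
      = ((t : ℂ) * a ^ (n + t) * m) • v (k * (n + t)) := by
    intro n t ht
    rw [Lop_v, if_neg ht, map_smul, phi_v, smul_smul, zpow_add₀ ha]
    ring_nf
  have hL0 : ∀ n : ℤ, φmap a m k (Lop n (v (-n))) = 0 := by
    intro n
    rw [Lop_v, if_pos rfl, map_zero]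
  have hI : ∀ n t : ℤ, t ≠ 0 → φmap a m k (Iop F n (v t)) = 0 := by
    intro n t ht
    rw [Iop_v, if_neg (by simp [ht]), map_zero]
  have hI0 : ∀ n : ℤ, n ≠ 0 → φmap a m k (Iop F n (v 0)) = (F * a ^ n * m) • v (k * n) := by
    intro n hn
    rw [Iop_v, if_pos ⟨rfl, hn⟩, map_smul, phi_v, smul_smul]
    ring_nf
  refine ⟨?_, ?_, hL, hL0, hI, hI0⟩
  · intro n
    apply Finsupp.lhom_ext (fun t c => ?_)
    have hbase : ∀ t : ℤ, (φmap a m k ∘ₗ Lop n) (v t)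
        = (((1 / (k : ℂ) * a ^ n) • Lop (k * n)) ∘ₗ φmap a m k) (v t) := by
      intro t
      simp only [LinearMap.comp_apply, LinearMap.smul_apply, phi_v, map_smul, Lop_v]
      by_cases ht : t = -n
      · subst ht
        rw [if_pos rfl, map_zero]
        rw [if_pos (by ring)]
        simp
      · rw [if_neg ht, if_neg (by
          intro h
          apply ht
          have : k * t = k * (-n) := by linarith [h, (by ring : -(k*n) = k * (-n))]
          exact mul_left_cancel₀ hk this)]
        rw [map_smul, phi_v, smul_smul, smul_smul, smul_smul]
        rw [show k * n + k * t = k * (n + t) by ring]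
        congr 1
        have hkC : (k : ℂ) ≠ 0 := Int.cast_ne_zero.mpr hk
        push_cast
        rw [zpow_add₀ ha]
        field_simp
    have := hbase t
    calc (φmap a m k ∘ₗ Lop n) (Finsupp.single t c)
        = c • (φmap a m k ∘ₗ Lop n) (v t) := by
          rw [← map_smul]; congr 1; rw [v, Finsupp.smul_single', mul_one]
      _ = c • (((1 / (k : ℂ) * a ^ n) • Lop (k * n)) ∘ₗ φmap a m k) (v t) := by rw [this]
      _ = _ := by
          rw [← map_smul]; congr 1; rw [v, Finsupp.smul_single', mul_one]
  · intro n
    apply Finsupp.lhom_ext (fun t c => ?_)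
    have hbase : ∀ t : ℤ, (φmap a m k ∘ₗ Iop F n) (v t)
        = ((a ^ n • Iop F (k * n)) ∘ₗ φmap a m k) (v t) := by
      intro t
      simp only [LinearMap.comp_apply, LinearMap.smul_apply, phi_v, map_smul, Iop_v]
      by_cases ht : t = 0
      · subst ht
        by_cases hn : n = 0
        · subst hn
          simp
        · rw [if_pos ⟨rfl, hn⟩, if_pos ⟨mul_zero k, by exact mul_ne_zero hk hn⟩]
          rw [map_smul, phi_v, smul_smul, smul_smul, smul_smul]
          congr 1
          simp [mul_comm, mul_assoc, mul_left_comm]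
      · rw [if_neg (by simp [ht]), if_neg (by simp [ht, hk]), map_zero]
        simp
    have := hbase t
    calc (φmap a m k ∘ₗ Iop F n) (Finsupp.single t c)
        = c • (φmap a m k ∘ₗ Iop F n) (v t) := by
          rw [← map_smul]; congr 1; rw [v, Finsupp.smul_single', mul_one]
      _ = c • ((a ^ n • Iop F (k * n)) ∘ₗ φmap a m k) (v t) := by rw [this]
      _ = _ := by
          rw [← map_smul]; congr 1; rw [v, Finsupp.smul_single', mul_one]
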